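/- Let X be an ordered vector space and (a_n), (b_n) sequences in X converging to a and b respectively with respect to the sequential order topology τ_os(X). Then (a_n + b_n) converges to a + b with respect to τ_os(X). -/

import Mathlib

/-- A net `x`, indexed by a set with relation `r`, *order converges* to `l` in a poset if it is
squeezed between an increasing net with supremum `l` and a decreasing net with infimum `l`. -/
def OrderConvNet {ι P : Type*} (r : ι → ι → Prop) [Preorder P] (x : ι → P) (l : P) : Prop :=
  ∃ y z : ι → P,
    (∀ i j, r i j → y i ≤ y j) ∧ (∀ i j, r i j → z j ≤ z i) ∧
    (∀ i, y i ≤ x i ∧ x i ≤ z i) ∧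
    IsLUB (Set.range y) l ∧ IsGLB (Set.range z) l

/-- Order convergence of a sequence in a poset. -/
def SeqOrderConv {P : Type*} [Preorder P] (x : ℕ → P) (l : P) : Prop :=
  OrderConvNet (· ≤ · : ℕ → ℕ → Prop) x l

/-- The sequential order topology `τ_os(P)`: the finest topology on `P` preserving order
convergence of sequences. -/
def seqOrderTop (P : Type*) [Preorder P] : TopologicalSpace P :=
  sInf {t : TopologicalSpace P | ∀ (x : ℕ → P) (l : P), SeqOrderConv x l →
    Filter.Tendsto x Filter.atTop (@nhds P t l)}

/-- The class `OrderedSMul` as it stood in the older Mathlib (removed since). -/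
class OrderedSMul (R M : Type*) [Semiring R] [PartialOrder R] [AddCommMonoid M] [PartialOrder M]
    [SMulWithZero R M] : Prop where
  protected smul_lt_smul_of_pos : ∀ {a b : M} {c : R}, a < b → 0 < c → c • a < c • b
  protected lt_of_smul_lt_smul_of_pos : ∀ {a b : M} {c : R}, c • a < c • b → 0 < c → a < b

open Filter Set

section Aux

variable {X : Type*} [AddCommGroup X] [PartialOrder X] [IsOrderedAddMonoid X]

theorem seqOrderConv_const (c : X) : SeqOrderConv (fun _ : ℕ => c) c := by
  refine ⟨fun _ => c, fun _ => c, fun _ _ _ => le_rfl, fun _ _ _ => le_rfl,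
    fun _ => ⟨le_rfl, le_rfl⟩, ?_, ?_⟩
  · simpa [Set.range_const] using isLUB_singleton
  · simpa [Set.range_const] using isGLB_singleton

theorem isLUB_range_add {y y' : ℕ → X} {l l' : X}
    (hy : ∀ i j : ℕ, i ≤ j → y i ≤ y j) (hy' : ∀ i j : ℕ, i ≤ j → y' i ≤ y' j)
    (h : IsLUB (Set.range y) l) (h' : IsLUB (Set.range y') l') :
    IsLUB (Set.range fun n => y n + y' n) (l + l') := by
  constructor
  · rintro _ ⟨n, rfl⟩
    exact add_le_add (h.1 ⟨n, rfl⟩) (h'.1 ⟨n, rfl⟩)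
  · intro u hu
    have key : ∀ m n : ℕ, y n + y' m ≤ u := by
      intro m n
      calc y n + y' m ≤ y (max n m) + y' (max n m) :=
            add_le_add (hy _ _ (le_max_left _ _)) (hy' _ _ (le_max_right _ _))
        _ ≤ u := hu ⟨max n m, rfl⟩
    have h1 : ∀ m, y' m ≤ u - l := by
      intro m
      have hl : l ≤ u - y' m := by
        refine h.2 ?_
        rintro _ ⟨n, rfl⟩
        exact le_sub_iff_add_le.2 (key m n)
      exact le_sub_iff_add_le'.2 (le_sub_iff_add_le.1 hl)
    have h2 : l' ≤ u - l := by
      refine h'.2 ?_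
      rintro _ ⟨m, rfl⟩
      exact h1 m
    exact le_sub_iff_add_le'.1 h2

theorem isGLB_range_add {z z' : ℕ → X} {l l' : X}
    (hz : ∀ i j : ℕ, i ≤ j → z j ≤ z i) (hz' : ∀ i j : ℕ, i ≤ j → z' j ≤ z' i)
    (h : IsGLB (Set.range z) l) (h' : IsGLB (Set.range z') l') :
    IsGLB (Set.range fun n => z n + z' n) (l + l') := by
  constructor
  · rintro _ ⟨n, rfl⟩
    exact add_le_add (h.1 ⟨n, rfl⟩) (h'.1 ⟨n, rfl⟩)
  · intro u hu
    have key : ∀ m n : ℕ, u ≤ z n + z' m := by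
      intro m n
      calc u ≤ z (max n m) + z' (max n m) := hu ⟨max n m, rfl⟩
        _ ≤ z n + z' m :=
            add_le_add (hz _ _ (le_max_left _ _)) (hz' _ _ (le_max_right _ _))
    have h1 : ∀ m, u - l ≤ z' m := by
      intro m
      have hl : u - z' m ≤ l := by
        refine h.2 ?_
        rintro _ ⟨n, rfl⟩
        exact sub_le_iff_le_add.2 (key m n)
      exact sub_le_iff_le_add'.2 (sub_le_iff_le_add.1 hl)
    have h2 : u - l ≤ l' := by
      refine h'.2 ?_
      rintro _ ⟨m, rfl⟩
      exact h1 m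
    exact sub_le_iff_le_add'.1 h2

theorem SeqOrderConv.add {x x' : ℕ → X} {l l' : X} (h : SeqOrderConv x l)
    (h' : SeqOrderConv x' l') : SeqOrderConv (fun n => x n + x' n) (l + l') := by
  obtain ⟨y, z, hy, hz, hsq, hlu, hgl⟩ := h
  obtain ⟨y', z', hy', hz', hsq', hlu', hgl'⟩ := h'
  refine ⟨fun n => y n + y' n, fun n => z n + z' n, ?_, ?_, ?_, ?_, ?_⟩
  · intro i j hij; exact add_le_add (hy i j hij) (hy' i j hij)
  · intro i j hij; exact add_le_add (hz i j hij) (hz' i j hij)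
  · intro i; exact ⟨add_le_add (hsq i).1 (hsq' i).1, add_le_add (hsq i).2 (hsq' i).2⟩
  · exact isLUB_range_add hy hy' hlu hlu'
  · exact isGLB_range_add hz hz' hgl hgl'

theorem SeqOrderConv.comp {x : ℕ → X} {l : X} (h : SeqOrderConv x l) {g : ℕ → ℕ}
    (hg : StrictMono g) : SeqOrderConv (fun n => x (g n)) l := by
  obtain ⟨y, z, hy, hz, hsq, hlu, hgl⟩ := h
  refine ⟨fun n => y (g n), fun n => z (g n), ?_, ?_, ?_, ?_, ?_⟩
  · intro i j hij; exact hy _ _ (hg.monotone hij)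
  · intro i j hij; exact hz _ _ (hg.monotone hij)
  · intro i; exact hsq (g i)
  · constructor
    · rintro _ ⟨n, rfl⟩; exact hlu.1 ⟨g n, rfl⟩
    · intro u hu
      refine hlu.2 ?_
      rintro _ ⟨n, rfl⟩
      exact le_trans (hy n (g n) (hg.le_apply)) (hu ⟨n, rfl⟩)
  · constructor
    · rintro _ ⟨n, rfl⟩; exact hgl.1 ⟨g n, rfl⟩
    · intro u hu
      refine hgl.2 ?_
      rintro _ ⟨n, rfl⟩
      exact le_trans (hu ⟨n, rfl⟩) (hz n (g n) (hg.le_apply))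

/-- A set is sequentially order closed. -/
def CClosed (F : Set X) : Prop :=
  ∀ (x : ℕ → X) (l : X), (∀ n, x n ∈ F) → SeqOrderConv x l → l ∈ F

theorem CClosed.shift {F : Set X} (hF : CClosed F) (c : X) : CClosed {x : X | x + c ∈ F} := by
  intro x l hx h
  exact hF (fun n => x n + c) (l + c) hx (h.add (seqOrderConv_const c))

theorem CClosed.shift_left {F : Set X} (hF : CClosed F) (c : X) :
    CClosed {x : X | c + x ∈ F} := by
  intro x l hx h
  exact hF (fun n => c + x n) (c + l) hx ((seqOrderConv_const c).add h)

theorem CClosed.mem_of_frequently {F : Set X} (hF : CClosed F) {x : ℕ → X} {l : X}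
    (h : ∃ᶠ n in atTop, x n ∈ F) (hx : SeqOrderConv x l) : l ∈ F := by
  obtain ⟨g, hg, hmem⟩ := Filter.extraction_of_frequently_atTop h
  exact hF _ l hmem (hx.comp hg)

theorem CClosed.eventually_not_mem {F : Set X} (hF : CClosed F) {x : ℕ → X} {l : X}
    (hl : l ∉ F) (hx : SeqOrderConv x l) : ∀ᶠ n in atTop, x n ∉ F := by
  by_contra h
  exact hl (hF.mem_of_frequently
    ((Filter.not_eventually.mp h).mono fun n hn => not_not.mp hn) hx)

/-- The topology whose closed sets are the sequentially order closed sets. -/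
def tStar (X : Type*) [AddCommGroup X] [PartialOrder X] [IsOrderedAddMonoid X] : TopologicalSpace X where
  IsOpen U := CClosed Uᶜ
  isOpen_univ := by
    intro x l hx _
    simpa using hx 0
  isOpen_inter := by
    intro U V hU hV x l hx h
    simp only [Set.compl_inter] at hx ⊢
    by_cases hf : ∃ᶠ n in atTop, x n ∈ Uᶜ
    · exact Or.inl (hU.mem_of_frequently hf h)
    · have hev : ∀ᶠ n in atTop, x n ∈ Vᶜ := by
        filter_upwards [Filter.not_frequently.mp hf] with n hn
        exact (hx n).resolve_left hn
      exact Or.inr (hV.mem_of_frequently hev.frequently h)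
  isOpen_sUnion := by
    intro S hS x l hx h
    simp only [Set.mem_compl_iff, Set.mem_sUnion] at hx ⊢
    push_neg at hx ⊢
    intro U hU
    exact (hS U hU) x l (fun n => hx n U hU) h

theorem tStar_mem :
    tStar X ∈ {t : TopologicalSpace X | ∀ (x : ℕ → X) (l : X), SeqOrderConv x l →
      Filter.Tendsto x Filter.atTop (@nhds X t l)} := by
  intro x l h
  letI := tStar X
  rw [tendsto_nhds]
  intro U hU hl
  have hcc : CClosed Uᶜ := hU
  have := hcc.eventually_not_mem (by simpa using hl) h
  simpa [Set.preimage, Filter.Eventually] using this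

theorem seqOrderTop_eq : seqOrderTop X = tStar X := by
  apply le_antisymm
  · exact sInf_le tStar_mem
  · apply le_sInf
    intro t ht
    rw [TopologicalSpace.le_def]
    intro U hU
    show CClosed Uᶜ
    intro x l hx h
    by_contra hlU
    have hl : l ∈ U := not_not.mp hlU
    have htend := ht x l h
    have : ∀ᶠ n in atTop, x n ∈ U := by
      have := tendsto_nhds.mp htend U hU hl
      exact this
    obtain ⟨n, hn⟩ := this.exists
    exact hx n hn

theorem tendsto_tStar_eventually_not_mem {F : Set X} (hF : CClosed F) {w : ℕ → X} {m : X}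
    (hw : Filter.Tendsto w Filter.atTop (@nhds X (tStar X) m)) (hm : m ∉ F) :
    ∀ᶠ j in atTop, w j ∉ F := by
  letI := tStar X
  have hop : IsOpen Fᶜ := by
    show CClosed Fᶜᶜ
    rwa [compl_compl]
  have := tendsto_nhds.mp hw Fᶜ hop hm
  exact this

theorem bounded_or_tendsto (k : ℕ → ℕ) :
    (∃ K, ∃ᶠ n in atTop, k n = K) ∨ Filter.Tendsto k Filter.atTop Filter.atTop := by
  by_cases h : ∃ K, ∃ᶠ n in atTop, k n = K
  · exact Or.inl h
  · right
    push_neg at h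
    refine Filter.tendsto_atTop.2 fun K => ?_
    have hev : ∀ᶠ n in atTop, ∀ m ∈ Finset.range K, k n ≠ m := by
      rw [eventually_all_finset]
      intro m _
      exact h m
    filter_upwards [hev] with n hn
    by_contra hlt
    exact hn (k n) (Finset.mem_range.mpr (lt_of_not_ge hlt)) rfl

theorem exists_strictMono_comp {k : ℕ → ℕ} (hk : Filter.Tendsto k Filter.atTop Filter.atTop) :
    ∃ g : ℕ → ℕ, StrictMono g ∧ StrictMono (fun i => k (g i)) := by
  have H : ∀ i m : ℕ, ∃ n, i < n ∧ m < k n := by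
    intro i m
    rcases ((hk.eventually_gt_atTop m).and (Filter.eventually_gt_atTop i)).exists with
      ⟨n, h1, h2⟩
    exact ⟨n, h2, h1⟩
  choose f hf1 hf2 using H
  let g : ℕ → ℕ := fun i => Nat.rec 0 (fun _ prev => f prev (k prev)) i
  have hg : StrictMono g := strictMono_nat_of_lt_succ fun n => hf1 (g n) (k (g n))
  exact ⟨g, hg, strictMono_nat_of_lt_succ fun n => hf2 (g n) (k (g n))⟩

theorem strictMono_add_right (N : ℕ) : StrictMono (fun n : ℕ => n + N) :=
  fun _ _ h => Nat.add_lt_add_right h N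

/-- Mixed lemma: order convergence plus topological convergence is compatible with addition
into a sequentially order closed set. -/
theorem mixed {F : Set X} (hF : CClosed F) {f w : ℕ → X} {l m : X}
    (hf : SeqOrderConv f l) (hw : Filter.Tendsto w Filter.atTop (@nhds X (tStar X) m))
    (hsum : ∀ j, f j + w j ∈ F) : l + m ∈ F := by
  by_contra hlm
  have h1 : ∀ᶠ j in atTop, w j ∉ {x : X | l + x ∈ F} :=
    tendsto_tStar_eventually_not_mem (hF.shift_left l) hw hlm
  have h2 : ∀ᶠ j in atTop, f j ∉ {x : X | x + m ∈ F} :=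
    (hF.shift m).eventually_not_mem hlm hf
  obtain ⟨N, hN⟩ := Filter.eventually_atTop.mp (h1.and h2)
  set f' : ℕ → X := fun j => f (j + N) with hf'def
  set w' : ℕ → X := fun j => w (j + N) with hw'def
  have hf' : SeqOrderConv f' l := hf.comp (strictMono_add_right N)
  have hw' : Filter.Tendsto w' Filter.atTop (@nhds X (tStar X) m) :=
    hw.comp (strictMono_add_right N).tendsto_atTop
  have hsum' : ∀ j, f' j + w' j ∈ F := fun j => hsum (j + N)
  have hwnot : ∀ j, l + w' j ∉ F := fun j => (hN (j + N) (Nat.le_add_left N j)).1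
  have hfnot : ∀ j, f' j + m ∉ F := fun j => (hN (j + N) (Nat.le_add_left N j)).2
  set H : Set X := {x : X | ∃ j, x + f' j ∈ F} ∪ {x : X | x + l ∈ F} with hHdef
  have hH : CClosed H := by
    intro p q hp hq
    by_cases hfr : ∃ᶠ i in atTop, p i ∈ {x : X | x + l ∈ F}
    · exact Or.inr ((hF.shift l).mem_of_frequently hfr hq)
    · have hev : ∀ᶠ i in atTop, p i ∈ {x : X | ∃ j, x + f' j ∈ F} := by
        filter_upwards [Filter.not_frequently.mp hfr] with i hi
        exact (hp i).resolve_right hi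
      obtain ⟨N', hN'⟩ := Filter.eventually_atTop.mp hev
      set p' : ℕ → X := fun i => p (i + N') with hp'def
      have hq' : SeqOrderConv p' q := hq.comp (strictMono_add_right N')
      have hchoice : ∀ i, ∃ j, p' i + f' j ∈ F := fun i => hN' (i + N') (Nat.le_add_left N' i)
      choose k hk using hchoice
      rcases bounded_or_tendsto k with ⟨K, hK⟩ | hT
      · obtain ⟨g, hg, hgK⟩ := Filter.extraction_of_frequently_atTop hK
        have hseq : SeqOrderConv (fun i => p' (g i) + f' K) (q + f' K) :=
          (hq'.comp hg).add (seqOrderConv_const (f' K))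
        have hmem : ∀ i, p' (g i) + f' K ∈ F := fun i => by
          have := hk (g i); rwa [hgK i] at this
        exact Or.inl ⟨K, hF _ _ hmem hseq⟩
      · obtain ⟨g, hg, hkg⟩ := exists_strictMono_comp hT
        have hseq : SeqOrderConv (fun i => p' (g i) + f' (k (g i))) (q + l) :=
          (hq'.comp hg).add (hf'.comp hkg)
        have hmem : ∀ i, p' (g i) + f' (k (g i)) ∈ F := fun i => hk (g i)
        exact Or.inr (hF _ _ hmem hseq)
  have hwH : ∀ j, w' j ∈ H := fun j =>
    Or.inl ⟨j, by simpa [add_comm] using hsum' j⟩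
  have hmH : m ∉ H := by
    rintro (⟨j, hj⟩ | hm2)
    · exact hfnot j (by rwa [add_comm] at hj)
    · have h3 : m + l ∈ F := hm2
      rw [add_comm] at h3
      exact hlm h3
  have := tendsto_tStar_eventually_not_mem hH hw' hmH
  obtain ⟨j, hj⟩ := this.exists
  exact hj (hwH j)

/-- Key lemma: two topologically convergent sequences whose sum stays in a sequentially order
closed set have the sum of their limits in the set. -/
theorem keyA {F : Set X} (hF : CClosed F) {u v : ℕ → X} {a b : X}
    (hu : Filter.Tendsto u Filter.atTop (@nhds X (tStar X) a))
    (hv : Filter.Tendsto v Filter.atTop (@nhds X (tStar X) b))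
    (hsum : ∀ n, u n + v n ∈ F) : a + b ∈ F := by
  by_contra hab
  have h1 : ∀ᶠ k in atTop, v k ∉ {x : X | a + x ∈ F} :=
    tendsto_tStar_eventually_not_mem (hF.shift_left a) hv hab
  obtain ⟨N, hN⟩ := Filter.eventually_atTop.mp h1
  set u' : ℕ → X := fun n => u (n + N) with hu'def
  set v' : ℕ → X := fun n => v (n + N) with hv'def
  have hu' : Filter.Tendsto u' Filter.atTop (@nhds X (tStar X) a) :=
    hu.comp (strictMono_add_right N).tendsto_atTop
  have hv' : Filter.Tendsto v' Filter.atTop (@nhds X (tStar X) b) :=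
    hv.comp (strictMono_add_right N).tendsto_atTop
  have hsum' : ∀ n, u' n + v' n ∈ F := fun n => hsum (n + N)
  have hvnot : ∀ n, a + v' n ∉ F := fun n => hN (n + N) (Nat.le_add_left N n)
  set G : Set X := {x : X | ∃ k, x + v' k ∈ F} ∪ {x : X | x + b ∈ F} with hGdef
  have hG : CClosed G := by
    intro p q hp hq
    by_cases hfr : ∃ᶠ i in atTop, p i ∈ {x : X | x + b ∈ F}
    · exact Or.inr ((hF.shift b).mem_of_frequently hfr hq)
    · have hev : ∀ᶠ i in atTop, p i ∈ {x : X | ∃ k, x + v' k ∈ F} := by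
        filter_upwards [Filter.not_frequently.mp hfr] with i hi
        exact (hp i).resolve_right hi
      obtain ⟨N', hN'⟩ := Filter.eventually_atTop.mp hev
      set p' : ℕ → X := fun i => p (i + N') with hp'def
      have hq' : SeqOrderConv p' q := hq.comp (strictMono_add_right N')
      have hchoice : ∀ i, ∃ k, p' i + v' k ∈ F := fun i => hN' (i + N') (Nat.le_add_left N' i)
      choose k hk using hchoice
      rcases bounded_or_tendsto k with ⟨K, hK⟩ | hT
      · obtain ⟨g, hg, hgK⟩ := Filter.extraction_of_frequently_atTop hK
        have hseq : SeqOrderConv (fun i => p' (g i) + v' K) (q + v' K) :=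
          (hq'.comp hg).add (seqOrderConv_const (v' K))
        have hmem : ∀ i, p' (g i) + v' K ∈ F := fun i => by
          have := hk (g i); rwa [hgK i] at this
        exact Or.inl ⟨K, hF _ _ hmem hseq⟩
      · obtain ⟨g, hg, hkg⟩ := exists_strictMono_comp hT
        have hw : Filter.Tendsto (fun i => v' (k (g i))) Filter.atTop
            (@nhds X (tStar X) b) := hv'.comp hkg.tendsto_atTop
        have := mixed hF (hq'.comp hg) hw (fun i => hk (g i))
        exact Or.inr this
  have huG : ∀ n, u' n ∈ G := fun n => Or.inl ⟨n, hsum' n⟩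
  have haG : a ∉ G := by
    rintro (⟨k, hk⟩ | ha2)
    · exact hvnot k hk
    · exact hab ha2
  have := tendsto_tStar_eventually_not_mem hG hu' haG
  obtain ⟨n, hn⟩ := this.exists
  exact hn (huG n)

end Aux

/-- In an ordered vector space, addition of sequences is compatible with convergence in the
sequential order topology. -/
theorem stmt2 {X : Type*} [AddCommGroup X] [PartialOrder X] [IsOrderedAddMonoid X] [Module ℝ X] [OrderedSMul ℝ X]
    (a b : X) (aN bN : ℕ → X)
    (ha : Filter.Tendsto aN Filter.atTop (@nhds X (seqOrderTop X) a))
    (hb : Filter.Tendsto bN Filter.atTop (@nhds X (seqOrderTop X) b)) :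
    Filter.Tendsto (fun n => aN n + bN n) Filter.atTop (@nhds X (seqOrderTop X) (a + b)) := by
  rw [seqOrderTop_eq] at ha hb ⊢
  letI := tStar X
  rw [tendsto_nhds]
  intro U hU hab
  have hcc : CClosed Uᶜ := hU
  by_contra h
  have hfreq : ∃ᶠ n in Filter.atTop, aN n + bN n ∈ Uᶜ := by
    have h' : ¬ ∀ᶠ n in Filter.atTop, aN n + bN n ∈ U := h
    exact (Filter.not_eventually.mp h').mono fun n hn => hn
  obtain ⟨g, hg, hmem⟩ := Filter.extraction_of_frequently_atTop hfreq
  have : a + b ∈ Uᶜ :=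
    keyA hcc (ha.comp hg.tendsto_atTop) (hb.comp hg.tendsto_atTop) hmem
  exact this hab
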